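/- Let s : ℝ^n → ℝ^n satisfy the homogeneity property s(c x) = c^{α−1} s(x) for all c > 0 and all x ∈ ℝ^n, where α > 0. Fix β ∈ ℝ and c > 0. If γ : I → ℝ^n is a twice-differentiable solution of the geodesic equation γ̈ − 2β (s(γ) · γ̇) γ̇ + β s(γ) ‖γ̇‖² = 0, then the rescaled curve ψ(t) = c γ(t) is a solution of the geodesic equation with inverse temperature β c^{−α}: ψ̈ − 2β c^{−α} (s(ψ) · ψ̇) ψ̇ + β c^{−α} s(ψ) ‖ψ̇‖² = 0. -/

import Mathlib

open scoped RealInnerProductSpace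

/-- **Scaling of Fermat geodesics under homogeneous scores.**
If `s(c x) = c^{α−1} s(x)` for all `c > 0` (with `α > 0`), and `γ` solves the geodesic
equation `γ̈ − 2β (s(γ)·γ̇) γ̇ + β s(γ) ‖γ̇‖² = 0` on an interval `I`, then the rescaled
curve `ψ = c γ` solves the geodesic equation with inverse temperature `β c^{−α}`. -/
theorem fermat_geodesic_rescaling
    (n : ℕ) (s : EuclideanSpace ℝ (Fin n) → EuclideanSpace ℝ (Fin n))
    (α : ℝ) (hα : 0 < α)
    (hhom : ∀ c : ℝ, 0 < c → ∀ x, s (c • x) = c ^ (α - 1) • s x)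
    (β c : ℝ) (hc : 0 < c)
    (I : Set ℝ) (hI : Convex ℝ I)
    (γ : ℝ → EuclideanSpace ℝ (Fin n))
    (hγ : ∀ t ∈ I, DifferentiableAt ℝ γ t ∧ DifferentiableAt ℝ (deriv γ) t)
    (hgeo : ∀ t ∈ I,
      deriv (deriv γ) t
        - (2 * β * ⟪s (γ t), deriv γ t⟫) • deriv γ t
        + (β * ‖deriv γ t‖ ^ 2) • s (γ t) = 0) :
    ∀ t ∈ I,
      deriv (deriv (fun u => c • γ u)) t
        - (2 * (β * c ^ (-α)) * ⟪s (c • γ t), deriv (fun u => c • γ u) t⟫)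
            • deriv (fun u => c • γ u) t
        + ((β * c ^ (-α)) * ‖deriv (fun u => c • γ u) t‖ ^ 2) • s (c • γ t) = 0 := by
  intro t ht
  have hc0 : c ≠ 0 := ne_of_gt hc
  -- first derivative of the rescaled curve, as a function
  have hd : deriv (fun u => c • γ u) = fun u => c • deriv γ u := by
    funext u
    by_cases h : DifferentiableAt ℝ γ u
    · exact deriv_const_smul c h
    · rw [deriv_zero_of_not_differentiableAt h,
        deriv_zero_of_not_differentiableAt, smul_zero]
      intro hcon
      apply h
      have := hcon.const_smul c⁻¹
      simpa [Pi.smul_def, smul_smul, inv_mul_cancel₀ hc0] using this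
  have hd2 : deriv (deriv (fun u => c • γ u)) t = c • deriv (deriv γ) t := by
    rw [hd]
    exact deriv_const_smul c (hγ t ht).2
  have hs : s (c • γ t) = c ^ (α - 1) • s (γ t) := hhom c hc (γ t)
  have hinner : ⟪s (c • γ t), deriv (fun u => c • γ u) t⟫
      = c ^ α * ⟪s (γ t), deriv γ t⟫ := by
    rw [hs, hd]
    rw [real_inner_smul_left, real_inner_smul_right]
    rw [← mul_assoc]
    congr 1
    rw [← Real.rpow_add_one (ne_of_gt hc)]
    ring_nf
  have hnorm : ‖deriv (fun u => c • γ u) t‖ ^ 2 = c ^ 2 * ‖deriv γ t‖ ^ 2 := by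
    rw [hd]
    simp only [norm_smul, Real.norm_eq_abs, mul_pow, sq_abs]
  have key := hgeo t ht
  have hthis : c • (deriv (deriv γ) t
        - (2 * β * ⟪s (γ t), deriv γ t⟫) • deriv γ t
        + (β * ‖deriv γ t‖ ^ 2) • s (γ t)) = 0 := by rw [key, smul_zero]
  rw [smul_add, smul_sub, smul_smul, smul_smul] at hthis
  have e1 : c ^ (-α) * c ^ α = 1 := by
    rw [← Real.rpow_add hc]; simp
  have e2 : c ^ (-α) * c ^ (α - 1) * c ^ 2 = c := by
    rw [show (c:ℝ) ^ 2 = c ^ ((2:ℕ):ℝ) by rw [Real.rpow_natCast],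
      mul_assoc, ← Real.rpow_add hc, ← Real.rpow_add hc]
    push_cast
    rw [show -α + (α - 1 + 2) = (1:ℝ) by ring, Real.rpow_one]
  have hd1 : deriv (fun u => c • γ u) t = c • deriv γ t := by rw [hd]
  rw [hd2, hinner, hnorm, hd1, hs]
  convert hthis using 2
  · rw [smul_smul]
    have h1 : 2 * (β * c ^ (-α)) * (c ^ α * (inner ℝ (s (γ t)) (deriv γ t) : ℝ)) * c
        = c * (2 * β * (inner ℝ (s (γ t)) (deriv γ t) : ℝ)) := by
      linear_combination (2 * β * (inner ℝ (s (γ t)) (deriv γ t) : ℝ) * c) * e1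
    rw [h1]
  · rw [smul_smul]
    have h2 : β * c ^ (-α) * (c ^ 2 * ‖deriv γ t‖ ^ 2) * c ^ (α - 1)
        = c * (β * ‖deriv γ t‖ ^ 2) := by
      linear_combination (β * ‖deriv γ t‖ ^ 2) * e2
    rw [h2]
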